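/- Let z > 0, C > 0, ω > 0 and e = (e₁, e₂, e₃) ∈ ℝ³. Assume ω² C²/(2z) < 1 and |2 C e₁/√z + 2 C² ω e₂/z + C²(e₁² + e₂²)/z²| < ω² C²/2. Then the point y = (z + C e₁/√z, (C e₂ + C ω z)/√z, C e₃/√z) satisfies d_r(y) ≥ z + ω² C²/6. -/

import Mathlib

noncomputable def vec3 (a b c : ℝ) : EuclideanSpace ℝ (Fin 3) := WithLp.toLp 2 ![a, b, c]

noncomputable def dr (x : EuclideanSpace ℝ (Fin 3)) : ℝ :=
  Real.sqrt (x 0 ^ 2 + x 1 ^ 2)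

theorem stmt_5 (z C ω e₁ e₂ e₃ : ℝ) (hz : 0 < z) (hC : 0 < C) (hω : 0 < ω)
    (h1 : ω ^ 2 * C ^ 2 / (2 * z) < 1)
    (h2 : |2 * C * e₁ / Real.sqrt z + 2 * C ^ 2 * ω * e₂ / z +
      C ^ 2 * (e₁ ^ 2 + e₂ ^ 2) / z ^ 2| < ω ^ 2 * C ^ 2 / 2) :
    dr (vec3 (z + C * e₁ / Real.sqrt z) ((C * e₂ + C * ω * z) / Real.sqrt z)
        (C * e₃ / Real.sqrt z)) ≥ z + ω ^ 2 * C ^ 2 / 6 := by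
  have hs : (0:ℝ) < Real.sqrt z := Real.sqrt_pos.mpr hz
  set s := Real.sqrt z with hsdef
  have hs2 : s ^ 2 = z := Real.sq_sqrt hz.le
  rw [ge_iff_le, show dr (vec3 (z + C * e₁ / s) ((C * e₂ + C * ω * z) / s)
      (C * e₃ / s)) = Real.sqrt ((z + C * e₁ / s) ^ 2 + ((C * e₂ + C * ω * z) / s) ^ 2)
      from rfl]
  have hrhs : (0:ℝ) ≤ z + ω ^ 2 * C ^ 2 / 6 := by positivity
  rw [Real.le_sqrt hrhs]
  have habs := abs_lt.mp h2
  have h2z : ω ^ 2 * C ^ 2 < 2 * z := by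
    rw [div_lt_one (by linarith)] at h1
    linarith
  have hE : -(ω ^ 2 * C ^ 2 / 2) < 2 * C * e₁ / s + 2 * C ^ 2 * ω * e₂ / z +
      C ^ 2 * (e₁ ^ 2 + e₂ ^ 2) / z ^ 2 := habs.1
  have key : (z + C * e₁ / s) ^ 2 + ((C * e₂ + C * ω * z) / s) ^ 2
      = z ^ 2 + C ^ 2 * ω ^ 2 * z + z * (2 * C * e₁ / s + 2 * C ^ 2 * ω * e₂ / z +
        C ^ 2 * (e₁ ^ 2 + e₂ ^ 2) / z ^ 2) := by
    rw [← hs2]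
    field_simp
    ring
  rw [key]
  nlinarith [mul_lt_mul_of_pos_left hE hz, sq_nonneg (ω * C)]
  positivity
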